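/- Let K be a proper simplicial complex on [n] which is roughly weighted with strictly positive weights w satisfying w([n]) = 1 and quota q with 0 < q < 1. Then for every Z ⊆ [n]: if w(Z) < 1 − q then Z ∈ K°, and if Z ∈ K° then w(Z) ≤ 1 − q. Consequently, K° is also roughly weighted, with the same weights w and quota 1 − q. -/
import Mathlib


open Finset

/-- A simplicial complex on `[n]`: a family of subsets containing `∅` and
closed under taking subsets. -/
def IsComplex (n : ℕ) (K : Set (Finset (Fin n))) : Prop :=
  ∅ ∈ K ∧ ∀ A B : Finset (Fin n), A ⊆ B → B ∈ K → A ∈ K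

/-- No ghost vertices: every singleton is a face. -/
def NoGhost (n : ℕ) (K : Set (Finset (Fin n))) : Prop :=
  ∀ i : Fin n, ({i} : Finset (Fin n)) ∈ K

/-- `K` is a threshold complex: there are strictly positive weights `w` and a
quota `q` with `A ∈ K ↔ w(A) < q`. -/
def IsThreshold (n : ℕ) (K : Set (Finset (Fin n))) : Prop :=
  ∃ (w : Fin n → ℝ) (q : ℝ), (∀ i, 0 < w i) ∧
    ∀ A : Finset (Fin n), A ∈ K ↔ ∑ i ∈ A, w i < q

/-- A K-submodular function: a pair of vectors `x y : [n] → ℝ` satisfying, for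
every ridge datum `[n] = X1 ⊔ {c1,c2} ⊔ X2` (so `X2 = (X1 ∪ {c1,c2})ᶜ`) with
`X1 ∈ K` and `X2 ∈ K°` (i.e. `X2ᶜ = X1 ∪ {c1,c2} ∉ K`):
the Λ-, V- and X-configuration inequalities. -/
def IsKSubmodular (n : ℕ) (K : Set (Finset (Fin n))) (x y : Fin n → ℝ) : Prop :=
  ∀ (X1 : Finset (Fin n)) (c1 c2 : Fin n),
    c1 ≠ c2 → c1 ∉ X1 → c2 ∉ X1 → X1 ∈ K → insert c1 (insert c2 X1) ∉ K →
    ((insert c1 X1 ∈ K → insert c2 X1 ∈ K →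
        ∑ i ∈ X1, x i + x c1 + x c2 > ∑ j ∈ (insert c1 (insert c2 X1))ᶜ, y j) ∧
     (insert c1 X1 ∉ K → insert c2 X1 ∉ K →
        ∑ j ∈ (insert c1 (insert c2 X1))ᶜ, y j + y c1 + y c2 > ∑ i ∈ X1, x i) ∧
     (insert c2 X1 ∈ K → insert c1 X1 ∉ K → x c2 + y c2 > 0))

/-- A non-strict K-submodular function: the Λ- and V-inequalities are non-strict,
and for X-configurations with distinguished element `c2` one requires
`x c2 > 0` and `y c2 > 0`. -/
def IsNonStrictKSubmodular (n : ℕ) (K : Set (Finset (Fin n))) (x y : Fin n → ℝ) : Prop :=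
  ∀ (X1 : Finset (Fin n)) (c1 c2 : Fin n),
    c1 ≠ c2 → c1 ∉ X1 → c2 ∉ X1 → X1 ∈ K → insert c1 (insert c2 X1) ∉ K →
    ((insert c1 X1 ∈ K → insert c2 X1 ∈ K →
        ∑ i ∈ X1, x i + x c1 + x c2 ≥ ∑ j ∈ (insert c1 (insert c2 X1))ᶜ, y j) ∧
     (insert c1 X1 ∉ K → insert c2 X1 ∉ K →
        ∑ j ∈ (insert c1 (insert c2 X1))ᶜ, y j + y c1 + y c2 ≥ ∑ i ∈ X1, x i) ∧
     (insert c2 X1 ∈ K → insert c1 X1 ∉ K → 0 < x c2 ∧ 0 < y c2))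

/-- `K` (the set of losing coalitions) is roughly weighted with strictly positive
weights `w` and quota `q > 0`. -/
def RoughlyWeighted (n : ℕ) (K : Set (Finset (Fin n))) (w : Fin n → ℝ) (q : ℝ) : Prop :=
  (∀ i, 0 < w i) ∧ 0 < q ∧ ∀ X : Finset (Fin n),
    (q < ∑ i ∈ X, w i → X ∉ K) ∧ (∑ i ∈ X, w i < q → X ∈ K)

/-- If a proper simplicial complex `K` on `[n]` is roughly
weighted with strictly positive weights `w`, `w([n]) = 1` and quota `0 < q < 1`,
then for every `Z ⊆ [n]`: `w(Z) < 1 - q` implies `Z ∈ K°` (i.e. `Zᶜ ∉ K`), and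
`Z ∈ K°` implies `w(Z) ≤ 1 - q`. Consequently the Alexander dual
`K° = {A : Aᶜ ∉ K}` is roughly weighted with the same weights and quota `1 - q`. -/
theorem dual_roughlyWeighted (n : ℕ) (K : Set (Finset (Fin n)))
    (hK : IsComplex n K) (hproper : K ≠ Set.univ)
    (w : Fin n → ℝ) (q : ℝ) (hrw : RoughlyWeighted n K w q)
    (hsum : ∑ i, w i = 1) (hq1 : q < 1) :
    (∀ Z : Finset (Fin n), ∑ i ∈ Z, w i < 1 - q → Zᶜ ∉ K) ∧
    (∀ Z : Finset (Fin n), Zᶜ ∉ K → ∑ i ∈ Z, w i ≤ 1 - q) ∧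
    RoughlyWeighted n {A : Finset (Fin n) | Aᶜ ∉ K} w (1 - q) := by
  obtain ⟨hw, hq0, hX⟩ := hrw
  have hcompl : ∀ Z : Finset (Fin n), ∑ i ∈ Zᶜ, w i = 1 - ∑ i ∈ Z, w i := by
    intro Z
    have := Finset.sum_add_sum_compl Z w
    linarith
  have h1 : ∀ Z : Finset (Fin n), ∑ i ∈ Z, w i < 1 - q → Zᶜ ∉ K := by
    intro Z hZ
    exact (hX Zᶜ).1 (by rw [hcompl]; linarith)
  have h2 : ∀ Z : Finset (Fin n), Zᶜ ∉ K → ∑ i ∈ Z, w i ≤ 1 - q := by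
    intro Z hZ
    by_contra h
    exact hZ ((hX Zᶜ).2 (by rw [hcompl]; linarith))
  refine ⟨h1, h2, hw, by linarith, fun Z => ⟨fun hgt hmem => ?_, fun hlt => h1 Z hlt⟩⟩
  exact hmem ((hX Zᶜ).2 (by rw [hcompl]; linarith))
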